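/- If G is a connected graph on n vertices such that there exists a symmetric matrix A ∈ S(G) with exactly two distinct eigenvalues, and every matrix in S(G) with two distinct eigenvalues has multiplicities k and n-k with k ≤ n/2, then every independent set S of vertices of G satisfies |S| ≤ k where k is the least integer such that some matrix in S(G) has two distinct eigenvalues with multiplicities k and n-k. -/

import Mathlib

open Matrix

/-- `A` belongs to `S(G)`: it is symmetric and its off-diagonal nonzero pattern
matches the adjacency of `G`. -/
def MemSG {n : ℕ} (G : SimpleGraph (Fin n)) (A : Matrix (Fin n) (Fin n) ℝ) : Prop :=
  A.IsSymm ∧ ∀ u v : Fin n, u ≠ v → (A u v ≠ 0 ↔ G.Adj u v)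

/-- `A` has exactly two distinct eigenvalues, with multiplicities `k` and `n - k`. -/
def TwoDistinctEigs {n : ℕ} (A : Matrix (Fin n) (Fin n) ℝ) (k : ℕ) : Prop :=
  ∃ (hA : A.IsHermitian) (μ₁ μ₂ : ℝ), μ₁ ≠ μ₂ ∧
    (∀ i, hA.eigenvalues i = μ₁ ∨ hA.eigenvalues i = μ₂) ∧
    Nat.card {i // hA.eigenvalues i = μ₁} = k ∧
    Nat.card {i // hA.eigenvalues i = μ₂} = n - k

theorem quad_zero {n : ℕ} {A : Matrix (Fin n) (Fin n) ℝ} (hA : A.IsHermitian) {μ₁ μ₂ : ℝ}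
    (hall : ∀ i, hA.eigenvalues i = μ₁ ∨ hA.eigenvalues i = μ₂) :
    A * A - (μ₁ + μ₂) • A + (μ₁ * μ₂) • (1 : Matrix (Fin n) (Fin n) ℝ) = 0 := by
  classical
  let c : Module.Basis (Fin n) ℝ (Fin n → ℝ) :=
    hA.eigenvectorBasis.toBasis.map (WithLp.linearEquiv 2 ℝ (Fin n → ℝ))
  have hc : ∀ i, c i = ⇑(hA.eigenvectorBasis i) := fun i => by
    simp [c]
  have hcEig : ∀ i, A *ᵥ c i = hA.eigenvalues i • c i := fun i => by
    rw [hc]; exact hA.mulVec_eigenvectorBasis i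
  set M := A * A - (μ₁ + μ₂) • A + (μ₁ * μ₂) • (1 : Matrix (Fin n) (Fin n) ℝ) with hM
  have h0 : M.mulVecLin = (0 : (Fin n → ℝ) →ₗ[ℝ] (Fin n → ℝ)) := by
    apply c.ext
    intro i
    have h := hcEig i
    have hz : M *ᵥ c i = 0 := by
      rw [hM]
      rcases hall i with he | he <;> rw [he] at h <;>
        simp only [Matrix.add_mulVec, Matrix.sub_mulVec, Matrix.smul_mulVec,
          Matrix.one_mulVec, ← Matrix.mulVec_mulVec, h, Matrix.mulVec_smul, smul_smul] <;>
        rw [← sub_smul, ← add_smul] <;>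
        [rw [show μ₁ * μ₁ - (μ₁ + μ₂) * μ₁ + μ₁ * μ₂ = 0 from by ring];
         rw [show μ₂ * μ₂ - (μ₁ + μ₂) * μ₂ + μ₁ * μ₂ = 0 from by ring]] <;>
        exact zero_smul ℝ _
    simpa [Matrix.mulVecLin_apply] using hz
  ext i j
  have h2 := LinearMap.congr_fun h0 (Pi.single j 1)
  simpa [Matrix.mulVecLin_apply, Matrix.mulVec_single] using congrFun h2 i


/-- Let `G` be a connected graph on `n` vertices such that some
matrix in `S(G)` has exactly two distinct eigenvalues, and every matrix in `S(G)`
with two distinct eigenvalues has multiplicities `k'` and `n - k'` with `k' ≤ n/2`.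
If `k` is the least integer such that some matrix in `S(G)` has two distinct
eigenvalues with multiplicities `k` and `n - k`, then every independent set `S`
of `G` satisfies `|S| ≤ k`. -/
theorem stmt_16 {n : ℕ} (G : SimpleGraph (Fin n)) (hconn : G.Connected)
    (hex : ∃ (A : Matrix (Fin n) (Fin n) ℝ) (k' : ℕ), MemSG G A ∧ TwoDistinctEigs A k')
    (hhalf : ∀ (A : Matrix (Fin n) (Fin n) ℝ) (k' : ℕ),
      MemSG G A → TwoDistinctEigs A k' → 2 * k' ≤ n)
    (k : ℕ)
    (hk : IsLeast {k' : ℕ | ∃ A : Matrix (Fin n) (Fin n) ℝ, MemSG G A ∧ TwoDistinctEigs A k'} k)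
    (S : Finset (Fin n)) (hS : ∀ u ∈ S, ∀ v ∈ S, ¬ G.Adj u v) :
    S.card ≤ k := by
  classical
  obtain ⟨⟨A, hAG, hAk⟩, -⟩ := hk
  obtain ⟨hA, μ₁, μ₂, hμ, hall, hc1, hc2⟩ := hAk
  have hkn : k ≤ n := by
    rw [← hc1, Nat.card_eq_fintype_card]
    calc Fintype.card {i // hA.eigenvalues i = μ₁} ≤ Fintype.card (Fin n) :=
          Fintype.card_subtype_le _
    _ = n := Fintype.card_fin n
  have h2k : 2 * k ≤ n := hhalf A k hAG ⟨hA, μ₁, μ₂, hμ, hall, hc1, hc2⟩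
  have h2nk : 2 * (n - k) ≤ n := by
    refine hhalf A (n - k) hAG ⟨hA, μ₂, μ₁, hμ.symm, fun i => (hall i).symm, hc2, ?_⟩
    rw [hc1]; omega
  have hn2k : n = 2 * k := by omega
  by_contra hcard
  push_neg at hcard
  have hSn : S.card ≤ n := by
    simpa using Finset.card_le_card (Finset.subset_univ S)
  -- basis of eigenvectors, as plain functions
  let c : Module.Basis (Fin n) ℝ (Fin n → ℝ) :=
    hA.eigenvectorBasis.toBasis.map (WithLp.linearEquiv 2 ℝ (Fin n → ℝ))
  have hcEig : ∀ i, A *ᵥ c i = hA.eigenvalues i • c i := fun i => by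
    have hci : c i = ⇑(hA.eigenvectorBasis i) := by simp [c]
    rw [hci]; exact hA.mulVec_eigenvectorBasis i
  let T : Finset (Fin n) := Finset.univ.filter (fun i => hA.eigenvalues i = μ₂)
  have hTcard : T.card = n - k := by
    rw [← hc2, Nat.card_eq_fintype_card, Fintype.card_subtype]
  let g : T → (Fin n → ℝ) := fun i => c i.1
  have hg : LinearIndependent ℝ g :=
    c.linearIndependent.comp (Subtype.val : T → Fin n) Subtype.val_injective
  let f : S → (Fin n → ℝ) := fun u => Pi.single u.1 1
  have hf : LinearIndependent ℝ f := by
    have h := (Pi.basisFun ℝ (Fin n)).linearIndependent.comp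
      (Subtype.val : S → Fin n) Subtype.val_injective
    have hfe : f = ⇑(Pi.basisFun ℝ (Fin n)) ∘ (Subtype.val : S → Fin n) := by
      funext u; simp [f, Function.comp]
    rw [hfe]; exact h
  let V : Submodule ℝ (Fin n → ℝ) := Submodule.span ℝ (Set.range g)
  let W : Submodule ℝ (Fin n → ℝ) := Submodule.span ℝ (Set.range f)
  have hVrank : Module.finrank ℝ V = n - k := by
    rw [show V = Submodule.span ℝ (Set.range g) from rfl,
      finrank_span_eq_card hg, Fintype.card_coe, hTcard]
  have hWrank : Module.finrank ℝ W = S.card := by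
    rw [show W = Submodule.span ℝ (Set.range f) from rfl,
      finrank_span_eq_card hf, Fintype.card_coe]
  have hinf : V ⊓ W ≠ ⊥ := by
    intro hbot
    have h1 := Submodule.finrank_sup_add_finrank_inf_eq V W
    rw [hbot, finrank_bot, hVrank, hWrank] at h1
    have h2 : Module.finrank ℝ ↥(V ⊔ W) ≤ n := by
      have h3 := Submodule.finrank_le (V ⊔ W : Submodule ℝ (Fin n → ℝ))
      rwa [Module.finrank_fin_fun] at h3
    omega
  obtain ⟨x, hxVW, hx0⟩ := (Submodule.ne_bot_iff _).mp hinf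
  have hxV : x ∈ V := (Submodule.mem_inf.mp hxVW).1
  have hxW : x ∈ W := (Submodule.mem_inf.mp hxVW).2
  have hxEig : A *ᵥ x = μ₂ • x := by
    refine Submodule.span_induction (p := fun y _ => A *ᵥ y = μ₂ • y) ?_ ?_ ?_ ?_ hxV
    · rintro y ⟨i, rfl⟩
      have h := hcEig i.1
      have h2 : hA.eigenvalues i.1 = μ₂ := (Finset.mem_filter.mp i.2).2
      rw [h2] at h; exact h
    · simp
    · intro a b _ _ ha hb; rw [Matrix.mulVec_add, ha, hb, smul_add]
    · intro r a _ ha; rw [Matrix.mulVec_smul, ha, smul_comm]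
  have hsupp : ∀ i, i ∉ S → x i = 0 := by
    intro i hi
    refine Submodule.span_induction (p := fun y _ => y i = 0) ?_ ?_ ?_ ?_ hxW
    · rintro y ⟨u, rfl⟩
      have hne : (u : Fin n) ≠ i := fun h => hi (h ▸ u.2)
      simp [f, Pi.single_apply, hne.symm]
    · simp
    · intro a b _ _ ha hb; simp [ha, hb]
    · intro r a _ ha; simp [ha]
  obtain ⟨u, hxu⟩ : ∃ u, x u ≠ 0 := by
    by_contra h; push_neg at h; exact hx0 (funext h)
  have huS : u ∈ S := by by_contra h; exact hxu (hsupp u h)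
  have hAuu : A u u = μ₂ := by
    have h1 := congrFun hxEig u
    have h2 : ∑ v, A u v * x v = A u u * x u := by
      apply Finset.sum_eq_single
      · intro v _ hvu
        by_cases hvS : v ∈ S
        · have hA0 : A u v = 0 := by
            by_contra hne
            exact hS u huS v hvS (((hAG.2) u v (Ne.symm hvu)).mp hne)
          rw [hA0, zero_mul]
        · rw [hsupp v hvS, mul_zero]
      · intro h; exact absurd (Finset.mem_univ u) h
    have h3 : (A *ᵥ x) u = ∑ v, A u v * x v := rfl
    have h4 : (μ₂ • x) u = μ₂ * x u := rfl
    rw [h3, h2, h4] at h1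
    have h5 : (A u u - μ₂) * x u = 0 := by ring_nf; nlinarith [h1]
    rcases mul_eq_zero.mp h5 with h | h
    · linarith [h]
    · exact absurd h hxu
  have hquad := quad_zero hA hall
  have hrow : ∀ w, w ≠ u → A u w = 0 := by
    have he := congrFun (congrFun hquad u) u
    simp only [Matrix.add_apply, Matrix.sub_apply, Matrix.smul_apply, Matrix.one_apply_eq,
      Matrix.zero_apply, smul_eq_mul, mul_one] at he
    have hmul : (A * A) u u = ∑ w, A u w * A u w := by
      rw [Matrix.mul_apply]
      exact Finset.sum_congr rfl fun w _ => by rw [hAG.1.apply u w]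
    have hsum : ∑ w, A u w * A u w = μ₂ * μ₂ := by
      rw [← hmul]; rw [hAuu] at he; nlinarith [he]
    have h5 := Finset.sum_erase_add Finset.univ (fun w => A u w * A u w) (Finset.mem_univ u)
    rw [hsum] at h5
    have h5' : (∑ w ∈ Finset.univ.erase u, A u w * A u w) + A u u * A u u = μ₂ * μ₂ := h5
    have hdiag : ∑ w ∈ Finset.univ.erase u, A u w * A u w = 0 := by
      have h6 : A u u * A u u = μ₂ * μ₂ := by rw [hAuu]
      linarith [h5', h6]
    intro w hw
    have h6 : ∀ v ∈ Finset.univ.erase u, 0 ≤ A u v * A u v := fun v _ => mul_self_nonneg _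
    have h7 := (Finset.sum_eq_zero_iff_of_nonneg h6).mp hdiag w
      (Finset.mem_erase.mpr ⟨hw, Finset.mem_univ w⟩)
    exact mul_self_eq_zero.mp h7
  -- final contradiction with connectivity
  have hn2 : 2 ≤ n := by omega
  obtain ⟨v, hvu⟩ := Fintype.exists_ne_of_one_lt_card
    (by simp; omega : 1 < Fintype.card (Fin n)) u
  obtain ⟨p⟩ : G.Reachable u v := hconn.preconnected u v
  cases p with
  | nil => exact hvu rfl
  | cons h q => exact (hAG.2 _ _ h.ne).mpr h (hrow _ h.ne')
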